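/- arXiv:2306.06059 — 5 statements merged into one kernel-verified Lean document; each statement's English description precedes it below -/
import Mathlib

section
/- Let Z^(n) = (Z_1,…,Z_n) be i.i.d. variables from a distribution P_0 on a Polish space, and let (P_n)_n be a sequence of random probability measures on ℝ² such that P_n is σ(Z^(n))-measurable for each n. Let (X_n, Y_n) be ℝ-valued random variables with conditional joint law P_n given P_n, and let P_n^X and P_n^Y denote the marginal conditional laws of X_n and Y_n. Suppose d_BL(P_n^X, P^X) → 0 in P_0-probability for a fixed probability measure P^X on ℝ, and d_BL(P_n^Y, δ_c) → 0 in P_0-probability for a fixed constant c ∈ ℝ. Then d_BL(conditional law of X_n + Y_n given P_n, conditional law of X_n + c given P_n) → 0 in P_0-probability, and d_BL(conditional law of X_n·Y_n given P_n, conditional law of c·X_n given P_n) → 0 in P_0-probability. -/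
open MeasureTheory ProbabilityTheory Filter
open scoped NNReal ENNReal

/-- The bounded Lipschitz distance between two probability measures on `ℝ`:
the supremum of `|∫ f dμ - ∫ f dν|` over all `f : ℝ → ℝ` whose sup-norm plus
Lipschitz constant is at most one. -/
noncomputable def dBL (μ ν : Measure ℝ) : ℝ :=
  sSup {d : ℝ | ∃ f : ℝ → ℝ, ∃ K : ℝ≥0, LipschitzWith K f ∧
    (∀ x, |f x| + (K : ℝ) ≤ 1) ∧ d = |(∫ x, f x ∂μ) - ∫ x, f x ∂ν|}

noncomputable def gfun (c : ℝ) : ℝ → ℝ := fun y => min (1/2) (|y - c| / 2)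
noncomputable def hfun (M : ℕ) : ℝ → ℝ := fun x => (1/2) * min 1 (max 0 (|x| - ((M:ℝ) - 1)))

lemma gfun_lip (c : ℝ) : LipschitzWith (1/2) (gfun c) := by
  apply LipschitzWith.of_dist_le_mul
  intro a b
  rw [Real.dist_eq, Real.dist_eq]
  have h1 : |gfun c a - gfun c b| ≤ max |(1:ℝ)/2 - 1/2| (abs (|a - c|/2 - |b - c|/2)) :=
    abs_min_sub_min_le_max _ _ _ _
  have h2 : abs (|a - c|/2 - |b - c|/2) ≤ |a - b| / 2 := by
    have := abs_abs_sub_abs_le_abs_sub (a - c) (b - c)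
    have hab : a - c - (b - c) = a - b := by ring
    rw [hab] at this
    have e : |a - c|/2 - |b - c|/2 = (|a - c| - |b - c|)/2 := by ring
    rw [e, abs_div, abs_of_nonneg (by norm_num : (0:ℝ) ≤ 2)]
    linarith
  have hc : ((1/2 : ℝ≥0) : ℝ) = 1/2 := by norm_num
  rw [hc]
  simp only [sub_self, abs_zero] at h1
  rcases le_max_iff.mp h1 with h | h
  · linarith [abs_nonneg (a - b)]
  · linarith

lemma gfun_nonneg (c y : ℝ) : 0 ≤ gfun c y := le_min (by norm_num) (by positivity)

lemma gfun_le (c y : ℝ) : gfun c y ≤ 1/2 := min_le_left _ _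

lemma gfun_self (c : ℝ) : gfun c c = 0 := by simp [gfun]

lemma gfun_bound (c : ℝ) : ∀ y, |gfun c y| + ((1/2 : ℝ≥0) : ℝ) ≤ 1 := by
  intro y
  rw [abs_of_nonneg (gfun_nonneg c y)]
  have := gfun_le c y
  push_cast
  linarith

lemma hfun_lip (M : ℕ) : LipschitzWith (1/2) (hfun M) := by
  apply LipschitzWith.of_dist_le_mul
  intro a b
  rw [Real.dist_eq, Real.dist_eq]
  unfold hfun
  rw [← mul_sub, abs_mul, abs_of_nonneg (by norm_num : (0:ℝ) ≤ 1/2)]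
  have h1 : |min 1 (max 0 (|a| - ((M:ℝ)-1))) - min 1 (max 0 (|b| - ((M:ℝ)-1)))| ≤
      max |(1:ℝ) - 1| (|max 0 (|a| - ((M:ℝ)-1)) - max 0 (|b| - ((M:ℝ)-1))|) :=
    abs_min_sub_min_le_max _ _ _ _
  have h2 : |max 0 (|a| - ((M:ℝ)-1)) - max 0 (|b| - ((M:ℝ)-1))| ≤
      max |(0:ℝ) - 0| (abs (|a| - ((M:ℝ)-1) - (|b| - ((M:ℝ)-1)))) := abs_max_sub_max_le_max _ _ _ _
  have h3 : abs (|a| - ((M:ℝ)-1) - (|b| - ((M:ℝ)-1))) = abs (|a| - |b|) := by ring_nf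
  have h4 : abs (|a| - |b|) ≤ |a - b| := abs_abs_sub_abs_le_abs_sub a b
  have hc : ((1/2 : ℝ≥0) : ℝ) = 1/2 := by norm_num
  rw [hc]
  simp only [sub_self, abs_zero] at h1 h2
  rw [h3] at h2
  have hab := abs_nonneg (a - b)
  rcases le_max_iff.mp h1 with h | h
  · nlinarith
  · rcases le_max_iff.mp h2 with h' | h'
    · nlinarith
    · nlinarith

lemma hfun_nonneg (M : ℕ) (x : ℝ) : 0 ≤ hfun M x := by
  unfold hfun; positivity

lemma hfun_le (M : ℕ) (x : ℝ) : hfun M x ≤ 1/2 := by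
  unfold hfun
  have : min 1 (max 0 (|x| - ((M:ℝ)-1))) ≤ 1 := min_le_left _ _
  linarith

lemma hfun_bound (M : ℕ) : ∀ x, |hfun M x| + ((1/2 : ℝ≥0) : ℝ) ≤ 1 := by
  intro x
  rw [abs_of_nonneg (hfun_nonneg M x)]
  have := hfun_le M x
  push_cast
  linarith

lemma hfun_eq_half (M : ℕ) (x : ℝ) (hx : (M:ℝ) ≤ |x|) : hfun M x = 1/2 := by
  unfold hfun
  rw [max_eq_right (by linarith), min_eq_left (by linarith)]
  norm_num

lemma hfun_eq_zero (M : ℕ) (x : ℝ) (hx : |x| ≤ (M:ℝ) - 1) : hfun M x = 0 := by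
  unfold hfun
  rw [max_eq_left (by linarith)]
  norm_num

lemma test_abs_le {f : ℝ → ℝ} {K : ℝ≥0} (hb : ∀ x, |f x| + (K : ℝ) ≤ 1) (x : ℝ) :
    |f x| ≤ 1 := by have := hb x; have := K.coe_nonneg; linarith

lemma test_integrable {μ : Measure ℝ} [IsFiniteMeasure μ] {f : ℝ → ℝ} {K : ℝ≥0}
    (hf : LipschitzWith K f) (hb : ∀ x, |f x| + (K : ℝ) ≤ 1) : Integrable f μ :=
  ⟨hf.continuous.aestronglyMeasurable, HasFiniteIntegral.of_bounded (C := 1)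
    (Filter.Eventually.of_forall fun x => by rw [Real.norm_eq_abs]; exact test_abs_le hb x)⟩

lemma dBL_mem_le {μ ν : Measure ℝ} [IsProbabilityMeasure μ] [IsProbabilityMeasure ν]
    {f : ℝ → ℝ} {K : ℝ≥0} (hf : LipschitzWith K f) (hb : ∀ x, |f x| + (K : ℝ) ≤ 1) :
    |(∫ x, f x ∂μ) - ∫ x, f x ∂ν| ≤ 2 := by
  have h1 : ‖∫ x, f x ∂μ‖ ≤ 1 * (μ Set.univ).toReal :=
    norm_integral_le_of_norm_le_const (Filter.Eventually.of_forall fun x => by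
      rw [Real.norm_eq_abs]; exact test_abs_le hb x)
  have h2 : ‖∫ x, f x ∂ν‖ ≤ 1 * (ν Set.univ).toReal :=
    norm_integral_le_of_norm_le_const (Filter.Eventually.of_forall fun x => by
      rw [Real.norm_eq_abs]; exact test_abs_le hb x)
  simp [Real.norm_eq_abs] at h1 h2
  calc |(∫ x, f x ∂μ) - ∫ x, f x ∂ν| ≤ |∫ x, f x ∂μ| + |∫ x, f x ∂ν| := abs_sub _ _
    _ ≤ 2 := by linarith

lemma le_dBL {μ ν : Measure ℝ} [IsProbabilityMeasure μ] [IsProbabilityMeasure ν]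
    {f : ℝ → ℝ} {K : ℝ≥0} (hf : LipschitzWith K f) (hb : ∀ x, |f x| + (K : ℝ) ≤ 1) :
    |(∫ x, f x ∂μ) - ∫ x, f x ∂ν| ≤ dBL μ ν := by
  apply le_csSup
  · exact ⟨2, by rintro d ⟨g, L, hg, hbg, rfl⟩; exact dBL_mem_le hg hbg⟩
  · exact ⟨f, K, hf, hb, rfl⟩

lemma dBL_le {μ ν : Measure ℝ} {B : ℝ} (hB : 0 ≤ B)
    (h : ∀ (f : ℝ → ℝ) (K : ℝ≥0), LipschitzWith K f → (∀ x, |f x| + (K : ℝ) ≤ 1) →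
      |(∫ x, f x ∂μ) - ∫ x, f x ∂ν| ≤ B) : dBL μ ν ≤ B :=
  Real.sSup_le (by rintro d ⟨f, K, hf, hb, rfl⟩; exact h f K hf hb) hB

lemma test_K_le {f : ℝ → ℝ} {K : ℝ≥0} (hb : ∀ x, |f x| + (K : ℝ) ≤ 1) : (K : ℝ) ≤ 1 := by
  have := hb 0; have := abs_nonneg (f 0); linarith

lemma diff_le_two {f : ℝ → ℝ} {K : ℝ≥0} (hb : ∀ x, |f x| + (K : ℝ) ≤ 1) (a b : ℝ) :
    |f a - f b| ≤ 2 := by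
  have := test_abs_le hb a; have := test_abs_le hb b
  calc |f a - f b| ≤ |f a| + |f b| := abs_sub _ _
    _ ≤ 2 := by linarith

lemma add_pointwise {f : ℝ → ℝ} {K : ℝ≥0} (hf : LipschitzWith K f)
    (hb : ∀ x, |f x| + (K : ℝ) ≤ 1) (c x y : ℝ) :
    |f (x + y) - f (x + c)| ≤ 4 * gfun c y := by
  have h2 := diff_le_two hb (x + y) (x + c)
  have hK : |f (x + y) - f (x + c)| ≤ (K : ℝ) * |y - c| := by
    have := hf.dist_le_mul (x + y) (x + c)
    rw [Real.dist_eq, Real.dist_eq] at this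
    have e : x + y - (x + c) = y - c := by ring
    rwa [e] at this
  have hK1 := test_K_le hb
  have hyc := abs_nonneg (y - c)
  have h1 : |f (x + y) - f (x + c)| ≤ |y - c| := by nlinarith
  unfold gfun
  rcases le_total (|y - c|) 1 with h | h
  · rw [min_eq_right (by linarith)]; linarith
  · rw [min_eq_left (by linarith)]; linarith

lemma mul_pointwise {f : ℝ → ℝ} {K : ℝ≥0} (hf : LipschitzWith K f)
    (hb : ∀ x, |f x| + (K : ℝ) ≤ 1) (c : ℝ) (M : ℕ) (hM : 1 ≤ (M:ℝ)) (x y : ℝ) :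
    |f (x * y) - f (c * x)| ≤ 4 * M * gfun c y + 4 * hfun M x := by
  have h2 := diff_le_two hb (x * y) (c * x)
  have hK : |f (x * y) - f (c * x)| ≤ (K : ℝ) * (|x| * |y - c|) := by
    have := hf.dist_le_mul (x * y) (c * x)
    rw [Real.dist_eq, Real.dist_eq] at this
    have e : |x * y - c * x| = |x| * |y - c| := by
      rw [← abs_mul]; ring_nf
    rwa [e] at this
  have hK1 := test_K_le hb
  have hyc := abs_nonneg (y - c)
  have hx0 := abs_nonneg x
  have hgn := gfun_nonneg c y
  have hhn := hfun_nonneg M x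
  have h1 : |f (x * y) - f (c * x)| ≤ |x| * |y - c| := by
    have := mul_le_of_le_one_left (mul_nonneg hx0 hyc) hK1
    linarith
  rcases le_total (|x|) (M : ℝ) with hxM | hxM
  · unfold gfun
    rcases le_total (|y - c|) 1 with h | h
    · rw [min_eq_right (by linarith)]
      have : |x| * |y - c| ≤ (M:ℝ) * |y - c| := by nlinarith
      nlinarith
    · rw [min_eq_left (by linarith)]
      nlinarith
  · rw [hfun_eq_half M x hxM]
    nlinarith

lemma key_integral {μ : Measure (ℝ × ℝ)} [IsProbabilityMeasure μ]
    {φ ψ : ℝ × ℝ → ℝ} (hφ : Measurable φ) (hψ : Measurable ψ)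
    {f : ℝ → ℝ} {K : ℝ≥0} (hf : LipschitzWith K f) (hb : ∀ x, |f x| + (K : ℝ) ≤ 1)
    {b : ℝ × ℝ → ℝ} (hbi : Integrable b μ)
    (hpt : ∀ p, |f (φ p) - f (ψ p)| ≤ b p) :
    |(∫ x, f x ∂(μ.map φ)) - ∫ x, f x ∂(μ.map ψ)| ≤ ∫ p, b p ∂μ := by
  rw [integral_map hφ.aemeasurable hf.continuous.aestronglyMeasurable,
      integral_map hψ.aemeasurable hf.continuous.aestronglyMeasurable]
  have hi1 : Integrable (fun p => f (φ p)) μ :=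
    ⟨(hf.continuous.measurable.comp hφ).aestronglyMeasurable,
      HasFiniteIntegral.of_bounded (C := 1) (Filter.Eventually.of_forall fun p => by
        rw [Real.norm_eq_abs]; exact test_abs_le hb (φ p))⟩
  have hi2 : Integrable (fun p => f (ψ p)) μ :=
    ⟨(hf.continuous.measurable.comp hψ).aestronglyMeasurable,
      HasFiniteIntegral.of_bounded (C := 1) (Filter.Eventually.of_forall fun p => by
        rw [Real.norm_eq_abs]; exact test_abs_le hb (ψ p))⟩
  rw [← integral_sub hi1 hi2]
  calc |∫ p, (f (φ p) - f (ψ p)) ∂μ| ≤ ∫ p, |f (φ p) - f (ψ p)| ∂μ := by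
        rw [← Real.norm_eq_abs]
        refine (norm_integral_le_integral_norm _).trans (le_of_eq ?_)
        simp [Real.norm_eq_abs]
    _ ≤ ∫ p, b p ∂μ := integral_mono (hi1.sub hi2).abs hbi hpt

lemma dBL_nonneg (μ ν : Measure ℝ) [IsProbabilityMeasure μ] [IsProbabilityMeasure ν] :
    0 ≤ dBL μ ν := by
  have h := le_dBL (μ := μ) (ν := ν) (f := fun _ => 0) (K := 0)
    (LipschitzWith.const 0) (by intro x; simp)
  simpa using h

lemma bdd_cont_integrable {α : Type*} [MeasurableSpace α] {μ : Measure α} [IsFiniteMeasure μ]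
    {u : α → ℝ} (hm : Measurable u) (C : ℝ) (hC : ∀ x, |u x| ≤ C) : Integrable u μ :=
  ⟨hm.aestronglyMeasurable, HasFiniteIntegral.of_bounded (C := C)
    (Filter.Eventually.of_forall fun x => by rw [Real.norm_eq_abs]; exact hC x)⟩

lemma dBL_add_le (μ : Measure (ℝ × ℝ)) [IsProbabilityMeasure μ] (c : ℝ) :
    dBL (μ.map fun p => p.1 + p.2) (μ.map fun p => p.1 + c) ≤
      4 * dBL (μ.map Prod.snd) (Measure.dirac c) := by
  haveI : IsProbabilityMeasure (μ.map Prod.snd) :=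
    Measure.isProbabilityMeasure_map measurable_snd.aemeasurable
  have hd : 0 ≤ dBL (μ.map Prod.snd) (Measure.dirac c) := dBL_nonneg _ _
  apply dBL_le (by linarith)
  intro f K hf hb
  have hgi : Integrable (fun p : ℝ × ℝ => 4 * gfun c p.2) μ :=
    bdd_cont_integrable (((gfun_lip c).continuous.measurable.comp measurable_snd).const_mul 4)
      2 (fun p => by
        rw [abs_mul, abs_of_nonneg (by norm_num : (0:ℝ) ≤ 4),
          abs_of_nonneg (gfun_nonneg c p.2)]
        have := gfun_le c p.2; linarith)
  have key := key_integral (φ := fun p : ℝ × ℝ => p.1 + p.2) (measurable_fst.add measurable_snd)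
    (measurable_fst.add_const c) hf hb hgi (fun p => add_pointwise hf hb c p.1 p.2)
  have e : ∫ p : ℝ × ℝ, 4 * gfun c p.2 ∂μ = 4 * ∫ y, gfun c y ∂(μ.map Prod.snd) := by
    rw [integral_map measurable_snd.aemeasurable (gfun_lip c).continuous.aestronglyMeasurable,
      ← integral_const_mul]
  have le1 : ∫ y, gfun c y ∂(μ.map Prod.snd) ≤ dBL (μ.map Prod.snd) (Measure.dirac c) := by
    have e2 : ∫ y, gfun c y ∂(μ.map Prod.snd) =
        (∫ y, gfun c y ∂(μ.map Prod.snd)) - ∫ y, gfun c y ∂(Measure.dirac c) := by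
      rw [integral_dirac, gfun_self]; ring
    rw [e2]
    exact (le_abs_self _).trans (le_dBL (gfun_lip c) (gfun_bound c))
  rw [e] at key
  linarith

lemma dBL_mul_le (μ : Measure (ℝ × ℝ)) [IsProbabilityMeasure μ]
    (PX : Measure ℝ) [IsProbabilityMeasure PX] (c : ℝ) (M : ℕ) (hM : 1 ≤ (M:ℝ)) :
    dBL (μ.map fun p => p.1 * p.2) (μ.map fun p => c * p.1) ≤
      4 * M * dBL (μ.map Prod.snd) (Measure.dirac c) +
      4 * dBL (μ.map Prod.fst) PX + 4 * ∫ x, hfun M x ∂PX := by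
  haveI : IsProbabilityMeasure (μ.map Prod.snd) :=
    Measure.isProbabilityMeasure_map measurable_snd.aemeasurable
  haveI : IsProbabilityMeasure (μ.map Prod.fst) :=
    Measure.isProbabilityMeasure_map measurable_fst.aemeasurable
  have hdY : 0 ≤ dBL (μ.map Prod.snd) (Measure.dirac c) := dBL_nonneg _ _
  have hdX : 0 ≤ dBL (μ.map Prod.fst) PX := dBL_nonneg _ _
  have hint : 0 ≤ ∫ x, hfun M x ∂PX := integral_nonneg (hfun_nonneg M)
  apply dBL_le (by positivity)
  intro f K hf hb
  have hgi : Integrable (fun p : ℝ × ℝ => 4 * M * gfun c p.2 + 4 * hfun M p.1) μ := by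
    refine bdd_cont_integrable ?_ (2 * M + 2) ?_
    · exact (((gfun_lip c).continuous.measurable.comp measurable_snd).const_mul (4 * M)).add
        (((hfun_lip M).continuous.measurable.comp measurable_fst).const_mul 4)
    · intro p
      have h1 := gfun_nonneg c p.2; have h2 := gfun_le c p.2
      have h3 := hfun_nonneg M p.1; have h4 := hfun_le M p.1
      rw [abs_of_nonneg (by positivity)]
      nlinarith
  have key := key_integral (φ := fun p : ℝ × ℝ => p.1 * p.2) (measurable_fst.mul measurable_snd)
    (measurable_fst.const_mul c) hf hb hgi (fun p => mul_pointwise hf hb c M hM p.1 p.2)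
  have hgi2 : Integrable (fun p : ℝ × ℝ => gfun c p.2) μ :=
    bdd_cont_integrable ((gfun_lip c).continuous.measurable.comp measurable_snd) 1
      (fun p => by rw [abs_of_nonneg (gfun_nonneg c p.2)]; have := gfun_le c p.2; linarith)
  have hhi2 : Integrable (fun p : ℝ × ℝ => hfun M p.1) μ :=
    bdd_cont_integrable ((hfun_lip M).continuous.measurable.comp measurable_fst) 1
      (fun p => by rw [abs_of_nonneg (hfun_nonneg M p.1)]; have := hfun_le M p.1; linarith)
  have e : ∫ p : ℝ × ℝ, (4 * M * gfun c p.2 + 4 * hfun M p.1) ∂μ =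
      4 * M * (∫ y, gfun c y ∂(μ.map Prod.snd)) + 4 * ∫ x, hfun M x ∂(μ.map Prod.fst) := by
    rw [integral_add (hgi2.const_mul (4 * M)) (hhi2.const_mul 4),
      integral_const_mul, integral_const_mul,
      integral_map measurable_snd.aemeasurable (gfun_lip c).continuous.aestronglyMeasurable,
      integral_map measurable_fst.aemeasurable (hfun_lip M).continuous.aestronglyMeasurable]
  have leY : ∫ y, gfun c y ∂(μ.map Prod.snd) ≤ dBL (μ.map Prod.snd) (Measure.dirac c) := by
    have e2 : ∫ y, gfun c y ∂(μ.map Prod.snd) =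
        (∫ y, gfun c y ∂(μ.map Prod.snd)) - ∫ y, gfun c y ∂(Measure.dirac c) := by
      rw [integral_dirac, gfun_self]; ring
    rw [e2]
    exact (le_abs_self _).trans (le_dBL (gfun_lip c) (gfun_bound c))
  have leX : ∫ x, hfun M x ∂(μ.map Prod.fst) ≤ dBL (μ.map Prod.fst) PX + ∫ x, hfun M x ∂PX := by
    have : (∫ x, hfun M x ∂(μ.map Prod.fst)) - ∫ x, hfun M x ∂PX ≤ dBL (μ.map Prod.fst) PX :=
      (le_abs_self _).trans (le_dBL (hfun_lip M) (hfun_bound M))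
    linarith
  rw [e] at key
  have hM0 : (0:ℝ) ≤ 4 * M := by positivity
  nlinarith [mul_le_mul_of_nonneg_left leY hM0]

lemma tail_tendsto (PX : Measure ℝ) [IsProbabilityMeasure PX] :
    Tendsto (fun M => ∫ x, hfun M x ∂PX) atTop (nhds 0) := by
  have h := tendsto_integral_of_dominated_convergence (μ := PX)
    (F := fun M x => hfun M x) (f := fun _ => (0:ℝ)) (bound := fun _ => 1/2)
    (fun M => (hfun_lip M).continuous.aestronglyMeasurable)
    (integrable_const _)
    (fun M => Filter.Eventually.of_forall fun x => by
      rw [Real.norm_eq_abs, abs_of_nonneg (hfun_nonneg M x)]; exact hfun_le M x)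
    (Filter.Eventually.of_forall fun x => by
      apply Tendsto.congr' _ tendsto_const_nhds
      filter_upwards [eventually_ge_atTop (⌈|x|⌉₊ + 1)] with M hM
      refine (hfun_eq_zero M x ?_).symm
      have h1 : (⌈|x|⌉₊ : ℝ) + 1 ≤ (M:ℝ) := by exact_mod_cast hM
      have h2 : |x| ≤ (⌈|x|⌉₊ : ℝ) := Nat.le_ceil _
      linarith)
  simpa using h

/-- **Slutsky-type lemma for random sequences of probability measures (Lemma 2).**
Let `Z₁, Z₂, …` be i.i.d. from `P₀` on a Polish space, and let `Pₙ` be random probability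
measures on `ℝ²`, `σ(Z^{(n)})`-measurable, whose first marginals converge to a fixed law `P^X`
and whose second marginals converge to `δ_c` (both in `d_BL`, in probability). Then the laws
of `Xₙ + Yₙ` and `Xₙ + c`, and of `Xₙ·Yₙ` and `c·Xₙ` (under the conditional joint law `Pₙ`),
merge in `d_BL` in probability. -/
theorem slutsky_random_measures
    {𝒵 : Type*} [TopologicalSpace 𝒵] [PolishSpace 𝒵] [MeasurableSpace 𝒵] [BorelSpace 𝒵]
    {Ω : Type*} [MeasurableSpace Ω] (Pr : Measure Ω) [IsProbabilityMeasure Pr]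
    (P₀ : Measure 𝒵) [IsProbabilityMeasure P₀]
    (Z : ℕ → Ω → 𝒵) (hZmeas : ∀ i, Measurable (Z i))
    (hZlaw : ∀ i, Measure.map (Z i) Pr = P₀)
    (hZindep : iIndepFun Z Pr)
    (P : ℕ → Ω → Measure (ℝ × ℝ)) (hPprob : ∀ n ω, IsProbabilityMeasure (P n ω))
    (hPmeas : ∀ n, Measurable[MeasurableSpace.comap
        (fun ω => (fun i : Fin n => Z i ω)) inferInstance] (P n))
    (PX : Measure ℝ) [IsProbabilityMeasure PX] (c : ℝ)
    (hX : ∀ ε > (0 : ℝ), Tendsto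
      (fun n => Pr {ω | ε < dBL ((P n ω).map Prod.fst) PX}) atTop (nhds 0))
    (hY : ∀ ε > (0 : ℝ), Tendsto
      (fun n => Pr {ω | ε < dBL ((P n ω).map Prod.snd) (Measure.dirac c)}) atTop (nhds 0)) :
    (∀ ε > (0 : ℝ), Tendsto (fun n => Pr {ω |
        ε < dBL ((P n ω).map fun p => p.1 + p.2) ((P n ω).map fun p => p.1 + c)})
      atTop (nhds 0)) ∧
    (∀ ε > (0 : ℝ), Tendsto (fun n => Pr {ω |
        ε < dBL ((P n ω).map fun p => p.1 * p.2) ((P n ω).map fun p => c * p.1)})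
      atTop (nhds 0)) := by
  constructor
  · intro ε hε
    have hB := hY (ε / 4) (by positivity)
    refine tendsto_of_tendsto_of_tendsto_of_le_of_le tendsto_const_nhds hB
      (fun n => zero_le) (fun n => measure_mono ?_)
    intro ω hω
    simp only [Set.mem_setOf_eq] at hω ⊢
    haveI := hPprob n ω
    have := dBL_add_le (P n ω) c
    linarith
  · intro ε hε
    obtain ⟨M, hM8, hM1⟩ :=
      (((tail_tendsto PX).eventually_lt_const (show (0:ℝ) < ε / 8 by positivity)).and
        (eventually_ge_atTop 1)).exists
    have hM1' : (1:ℝ) ≤ (M:ℝ) := by exact_mod_cast hM1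
    have hMpos : (0:ℝ) < M := by linarith
    set δY := ε / (16 * M) with hδY
    set δX := ε / 16 with hδX
    have hδYpos : 0 < δY := by positivity
    have hδXpos : 0 < δX := by positivity
    have hBC : Tendsto (fun n => Pr {ω | δY < dBL ((P n ω).map Prod.snd) (Measure.dirac c)} +
        Pr {ω | δX < dBL ((P n ω).map Prod.fst) PX}) atTop (nhds 0) := by
      simpa using (hY δY hδYpos).add (hX δX hδXpos)
    refine tendsto_of_tendsto_of_tendsto_of_le_of_le tendsto_const_nhds hBC
      (fun n => zero_le) (fun n => ?_)
    refine le_trans (measure_mono ?_) (measure_union_le _ _)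
    intro ω hω
    simp only [Set.mem_setOf_eq, Set.mem_union] at hω ⊢
    by_contra hcon
    push_neg at hcon
    obtain ⟨h1, h2⟩ := hcon
    haveI := hPprob n ω
    have key := dBL_mul_le (P n ω) PX c M hM1'
    have e1 : 4 * (M:ℝ) * dBL ((P n ω).map Prod.snd) (Measure.dirac c) ≤ ε / 4 := by
      have : 4 * (M:ℝ) * δY = ε / 4 := by
        rw [hδY]; field_simp; ring
      nlinarith
    have e2 : 4 * dBL ((P n ω).map Prod.fst) PX ≤ ε / 4 := by
      rw [hδX] at h2; linarith
    have e3 : 4 * ∫ x, hfun M x ∂PX ≤ ε / 2 := by linarith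
    linarith
end

section
/- Let f and f_0 be probability densities on ℝ with respect to Lebesgue measure, let M = ‖f_0‖_∞ with 0 < M < ∞, and suppose f is Lipschitz continuous with Lipschitz constant L > 0. If ∫ (√f(z) − √f_0(z))² dz < 8M²/L, then f(z) ≤ 8M for all z ∈ ℝ. -/
open MeasureTheory Filter

/-- **Sup-norm bound for a Lipschitz density close to a bounded density in Hellinger distance.**
If `f, f₀` are probability densities on `ℝ`, `M = ‖f₀‖_∞ ∈ (0, ∞)`, `f` is `L`-Lipschitz
with `L > 0`, and `∫ (√f − √f₀)² < 8M²/L`, then `f ≤ 8M` everywhere. -/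
theorem lipschitz_density_sup_bound
    (f f₀ : ℝ → ℝ) (hf : Measurable f) (hf₀ : Measurable f₀)
    (hfnn : ∀ x, 0 ≤ f x) (hf₀nn : ∀ x, 0 ≤ f₀ x)
    (hfI : Integrable f) (hf₀I : Integrable f₀)
    (hfint : ∫ x, f x = 1) (hf₀int : ∫ x, f₀ x = 1)
    (M : ℝ) (hbdd : BddAbove (Set.range f₀)) (hM : M = ⨆ x, f₀ x) (hMpos : 0 < M)
    (L : ℝ) (hL : 0 < L) (hlip : LipschitzWith (Real.toNNReal L) f)
    (hH : ∫ z, (Real.sqrt (f z) - Real.sqrt (f₀ z)) ^ 2 < 8 * M ^ 2 / L) :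
    ∀ z, f z ≤ 8 * M := by
  intro z
  by_contra hz
  push_neg at hz
  set g : ℝ → ℝ := fun x => (Real.sqrt (f x) - Real.sqrt (f₀ x)) ^ 2 with hg
  have hgnn : ∀ x, 0 ≤ g x := fun x => sq_nonneg _
  have hgmeas : Measurable g := ((hf.sqrt.sub hf₀.sqrt).pow_const 2)
  have hf₀le : ∀ x, f₀ x ≤ M := by
    intro x; rw [hM]; exact le_ciSup hbdd x
  have hgint : Integrable g := by
    refine (hfI.add hf₀I).mono' hgmeas.aestronglyMeasurable ?_
    filter_upwards with x
    rw [Real.norm_eq_abs, abs_of_nonneg (hgnn x)]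
    have h1 := Real.sq_sqrt (hfnn x)
    have h2 := Real.sq_sqrt (hf₀nn x)
    have h3 := Real.sqrt_nonneg (f x)
    have h4 := Real.sqrt_nonneg (f₀ x)
    simp only [hg, Pi.add_apply]
    nlinarith [mul_nonneg h3 h4]
  set I : Set ℝ := Set.Icc (z - 4 * M / L) (z + 4 * M / L) with hI
  have hglb : ∀ x ∈ I, M ≤ g x := by
    intro x hx
    obtain ⟨hx1, hx2⟩ := hx
    have hdist : |z - x| ≤ 4 * M / L := by
      rw [abs_sub_le_iff]; constructor <;> linarith
    have hfx : 4 * M ≤ f x := by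
      have h := hlip.dist_le_mul z x
      rw [Real.coe_toNNReal L hL.le, Real.dist_eq, Real.dist_eq] at h
      have : f z - f x ≤ L * |z - x| := (abs_sub_le_iff.mp h).1
      have hLd : L * |z - x| ≤ 4 * M := by
        calc L * |z - x| ≤ L * (4 * M / L) := by
              exact mul_le_mul_of_nonneg_left hdist hL.le
          _ = 4 * M := by field_simp
      linarith
    have hsf : 2 * Real.sqrt M ≤ Real.sqrt (f x) := by
      have h4M : Real.sqrt (4 * M) ≤ Real.sqrt (f x) := Real.sqrt_le_sqrt hfx
      rwa [show (4 : ℝ) * M = 2 ^ 2 * M by ring,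
        Real.sqrt_mul (by positivity) M, Real.sqrt_sq (by norm_num)] at h4M
    have hsf₀ : Real.sqrt (f₀ x) ≤ Real.sqrt M := Real.sqrt_le_sqrt (hf₀le x)
    have hdiff : Real.sqrt M ≤ Real.sqrt (f x) - Real.sqrt (f₀ x) := by linarith
    calc M = Real.sqrt M ^ 2 := (Real.sq_sqrt hMpos.le).symm
      _ ≤ (Real.sqrt (f x) - Real.sqrt (f₀ x)) ^ 2 :=
          pow_le_pow_left₀ (Real.sqrt_nonneg M) hdiff 2
  have hIvol : volume I = ENNReal.ofReal (8 * M / L) := by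
    rw [hI, Real.volume_Icc]
    congr 1; ring
  have hlow : M * (8 * M / L) ≤ ∫ x in I, g x := by
    have := setIntegral_ge_of_const_le_real (μ := volume) (f := g) measurableSet_Icc
      (by rw [hIvol]; exact ENNReal.ofReal_ne_top) hglb hgint.integrableOn
    rwa [measureReal_def, ← hI, hIvol, ENNReal.toReal_ofReal (by positivity)] at this
  have hle : ∫ x in I, g x ≤ ∫ x, g x :=
    setIntegral_le_integral hgint (Filter.Eventually.of_forall hgnn)
  have : 8 * M ^ 2 / L ≤ ∫ x, g x := by
    calc 8 * M ^ 2 / L = M * (8 * M / L) := by ring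
      _ ≤ ∫ x in I, g x := hlow
      _ ≤ ∫ x, g x := hle
  exact absurd hH (not_lt.mpr this)
end

section
/- Let (X, A, Y) have joint law P_0 with X ∈ 𝒳, A ∈ {0,1}, and Y real-valued with E|Y| < ∞; let Q_0 be the law of X, let π_0(x) ∈ (0,1] be a version of E[A | X = x] with π_0 > 0 a.s., and let m_0 : 𝒳 → ℝ satisfy E[AY | X] = π_0(X) m_0(X) a.s. Let π : 𝒳 → (0,1] be measurable, m ∈ L²(Q_0), and Q any probability measure on 𝒳 with m ∈ L¹(Q), and suppose all integrals below are finite. Then the second-order remainder ∫ m_0 dQ_0 − ∫ m dQ − E_{P_0}[(A/π(X))(Y − m(X)) + m(X) − ∫ m dQ] equals ∫ π_0(x)(1/π_0(x) − 1/π(x))(m_0(x) − m(x)) dQ_0(x), and its absolute value is at most ‖1/π_0 − 1/π‖_{L²(Q_0)} · ‖m_0 − m‖_{L²(Q_0)}. -/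
open MeasureTheory ProbabilityTheory Filter
open scoped NNReal ENNReal

/-- **Second-order bias identity and doubly robust bound for the missing-at-random mean.**
For data `(X, A, Y) ~ P₀` with `A ∈ {0,1}`, `E|Y| < ∞`, `π₀` a version of `E[A|X]` with
`π₀ > 0`, and `m₀` satisfying `E[AY|X] = π₀(X)m₀(X)` a.s., the second-order remainder
`∫ m₀ dQ₀ − ∫ m dQ − E_{P₀}[(A/π(X))(Y − m(X)) + m(X) − ∫ m dQ]` equals
`∫ π₀(1/π₀ − 1/π)(m₀ − m) dQ₀`, and is bounded in absolute value by
`‖1/π₀ − 1/π‖_{L²(Q₀)} · ‖m₀ − m‖_{L²(Q₀)}`. -/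
theorem missing_second_order_bias
    {𝒳 : Type*} [MeasurableSpace 𝒳]
    (P₀ : Measure (𝒳 × ℝ × ℝ)) [IsProbabilityMeasure P₀]
    (hA : ∀ᵐ z ∂P₀, z.2.1 = 0 ∨ z.2.1 = 1)
    (hYint : Integrable (fun z : 𝒳 × ℝ × ℝ => z.2.2) P₀)
    (Q₀ : Measure 𝒳) (hQ₀ : Q₀ = P₀.map Prod.fst)
    (π₀ : 𝒳 → ℝ) (hπ₀meas : Measurable π₀) (hπ₀range : ∀ x, 0 < π₀ x ∧ π₀ x ≤ 1)
    (hπ₀ver : (fun z : 𝒳 × ℝ × ℝ => π₀ z.1) =ᵐ[P₀]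
      P₀[(fun z : 𝒳 × ℝ × ℝ => z.2.1) |
        MeasurableSpace.comap (fun z : 𝒳 × ℝ × ℝ => z.1) inferInstance])
    (m₀ : 𝒳 → ℝ) (hm₀meas : Measurable m₀)
    (hm₀ver : (fun z : 𝒳 × ℝ × ℝ => π₀ z.1 * m₀ z.1) =ᵐ[P₀]
      P₀[(fun z : 𝒳 × ℝ × ℝ => z.2.1 * z.2.2) |
        MeasurableSpace.comap (fun z : 𝒳 × ℝ × ℝ => z.1) inferInstance])
    (π : 𝒳 → ℝ) (hπmeas : Measurable π) (hπrange : ∀ x, 0 < π x ∧ π x ≤ 1)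
    (m : 𝒳 → ℝ) (hmmeas : Measurable m) (hmL2 : MemLp m 2 Q₀)
    (Q : Measure 𝒳) [IsProbabilityMeasure Q] (hmQ : Integrable m Q)
    -- all the integrals appearing below are finite
    (hint1 : Integrable (fun z : 𝒳 × ℝ × ℝ =>
      z.2.1 / π z.1 * (z.2.2 - m z.1) + m z.1) P₀)
    (hint2 : Integrable m₀ Q₀)
    (hint3 : Integrable (fun x => π₀ x * (1 / π₀ x - 1 / π x) * (m₀ x - m x)) Q₀)
    (hL2a : MemLp (fun x => 1 / π₀ x - 1 / π x) 2 Q₀)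
    (hL2b : MemLp (fun x => m₀ x - m x) 2 Q₀) :
    ((∫ x, m₀ x ∂Q₀) - (∫ x, m x ∂Q)
        - ∫ z, (z.2.1 / π z.1 * (z.2.2 - m z.1) + m z.1 - ∫ x, m x ∂Q) ∂P₀
      = ∫ x, π₀ x * (1 / π₀ x - 1 / π x) * (m₀ x - m x) ∂Q₀) ∧
    |(∫ x, m₀ x ∂Q₀) - (∫ x, m x ∂Q)
        - ∫ z, (z.2.1 / π z.1 * (z.2.2 - m z.1) + m z.1 - ∫ x, m x ∂Q) ∂P₀|
      ≤ Real.sqrt (∫ x, (1 / π₀ x - 1 / π x) ^ 2 ∂Q₀)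
        * Real.sqrt (∫ x, (m₀ x - m x) ^ 2 ∂Q₀) := by
  have hπ₀ne : ∀ x, π₀ x ≠ 0 := fun x => (hπ₀range x).1.ne'
  have hπne : ∀ x, π x ≠ 0 := fun x => (hπrange x).1.ne'
  have hle : MeasurableSpace.comap (fun z : 𝒳 × ℝ × ℝ => z.1) inferInstance
      ≤ (inferInstance : MeasurableSpace (𝒳 × ℝ × ℝ)) := by
    have h : Measurable (fun z : 𝒳 × ℝ × ℝ => z.1) := measurable_fst
    exact h.comap_le
  haveI : IsProbabilityMeasure Q₀ := by
    rw [hQ₀]; exact Measure.isProbabilityMeasure_map measurable_fst.aemeasurable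
  -- fst is ℱ-measurable
  have hfstℱ : Measurable[MeasurableSpace.comap (fun z : 𝒳 × ℝ × ℝ => z.1) inferInstance] (fun z : 𝒳 × ℝ × ℝ => z.1) :=
    Measurable.of_comap_le le_rfl
  -- integrability facts
  have hmQ₀ : Integrable m Q₀ := hmL2.integrable one_le_two
  have hmP₀ : Integrable (fun z : 𝒳 × ℝ × ℝ => m z.1) P₀ := by
    have := (integrable_map_measure (hQ₀ ▸ hmL2.1) measurable_fst.aemeasurable).mp
      (hQ₀ ▸ hmQ₀)
    exact this
  have habs : ∀ᵐ z ∂P₀, |(z : 𝒳 × ℝ × ℝ).2.1| ≤ 1 := by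
    filter_upwards [hA] with z hz
    rcases hz with h | h <;> rw [h] <;> norm_num
  have hAint : Integrable (fun z : 𝒳 × ℝ × ℝ => z.2.1) P₀ := by
    refine Integrable.mono' (integrable_const 1)
      (measurable_fst.comp measurable_snd).aestronglyMeasurable ?_
    filter_upwards [habs] with z hz using by simpa using hz
  have hAYint : Integrable (fun z : 𝒳 × ℝ × ℝ => z.2.1 * z.2.2) P₀ := by
    refine Integrable.mono' hYint.abs
      ((measurable_fst.comp measurable_snd).mul
        (measurable_snd.comp measurable_snd)).aestronglyMeasurable ?_
    filter_upwards [habs] with z hz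
    rw [Real.norm_eq_abs, abs_mul]
    exact mul_le_of_le_one_left (abs_nonneg _) hz
  have hAmint : Integrable (fun z : 𝒳 × ℝ × ℝ => m z.1 * z.2.1) P₀ := by
    refine Integrable.mono' hmP₀.abs
      ((hmmeas.comp measurable_fst).mul
        (measurable_fst.comp measurable_snd)).aestronglyMeasurable ?_
    filter_upwards [habs] with z hz
    rw [Real.norm_eq_abs, abs_mul]
    exact mul_le_of_le_one_right (abs_nonneg _) hz
  have hgint : Integrable (fun z : 𝒳 × ℝ × ℝ => z.2.1 * (z.2.2 - m z.1)) P₀ := by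
    have : (fun z : 𝒳 × ℝ × ℝ => z.2.1 * (z.2.2 - m z.1))
        = fun z => z.2.1 * z.2.2 - m z.1 * z.2.1 := by funext z; ring
    rw [this]; exact hAYint.sub hAmint
  -- integrability of the first term of the EIF
  have hfgint : Integrable (fun z : 𝒳 × ℝ × ℝ => z.2.1 / π z.1 * (z.2.2 - m z.1)) P₀ := by
    have : (fun z : 𝒳 × ℝ × ℝ => z.2.1 / π z.1 * (z.2.2 - m z.1))
        = fun z => (z.2.1 / π z.1 * (z.2.2 - m z.1) + m z.1) - m z.1 := by
      funext z; ring
    rw [this]; exact hint1.sub hmP₀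
  -- ℱ-strongly measurable functions
  have hsm : ∀ (h : 𝒳 → ℝ), Measurable h →
      StronglyMeasurable[MeasurableSpace.comap (fun z : 𝒳 × ℝ × ℝ => z.1) inferInstance] (fun z : 𝒳 × ℝ × ℝ => h z.1) := fun h hh =>
    (hh.comp hfstℱ).stronglyMeasurable
  -- the key conditional expectation computation
  have key : ∫ z, z.2.1 / π z.1 * (z.2.2 - m z.1) ∂P₀
      = ∫ x, π₀ x / π x * (m₀ x - m x) ∂Q₀ := by
    set f : (𝒳 × ℝ × ℝ) → ℝ := fun z => 1 / π z.1 with hf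
    set g : (𝒳 × ℝ × ℝ) → ℝ := fun z => z.2.1 * (z.2.2 - m z.1) with hg
    have hfg_eq : (fun z : 𝒳 × ℝ × ℝ => z.2.1 / π z.1 * (z.2.2 - m z.1)) = f * g := by
      funext z; simp only [hf, hg, Pi.mul_apply]; ring
    have hfgint' : Integrable (f * g) P₀ := by rw [← hfg_eq]; exact hfgint
    have h1 : ∫ z, (f * g) z ∂P₀ = ∫ z, (P₀[f * g|MeasurableSpace.comap (fun z : 𝒳 × ℝ × ℝ => z.1) inferInstance]) z ∂P₀ :=
      (integral_condExp hle (f := f * g)).symm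
    have h2 : P₀[f * g|MeasurableSpace.comap (fun z : 𝒳 × ℝ × ℝ => z.1) inferInstance] =ᵐ[P₀] f * P₀[g|MeasurableSpace.comap (fun z : 𝒳 × ℝ × ℝ => z.1) inferInstance] :=
      condExp_mul_of_stronglyMeasurable_left
        (hsm (fun x => 1 / π x) (hπmeas.const_div 1)) hfgint' hgint
    -- compute P₀[g|MeasurableSpace.comap (fun z : 𝒳 × ℝ × ℝ => z.1) inferInstance]
    have hg_eq : g = (fun z : 𝒳 × ℝ × ℝ => z.2.1 * z.2.2)
        - fun z : 𝒳 × ℝ × ℝ => m z.1 * z.2.1 := by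
      funext z; simp only [hg, Pi.sub_apply]; ring
    have h3 : P₀[g|MeasurableSpace.comap (fun z : 𝒳 × ℝ × ℝ => z.1) inferInstance] =ᵐ[P₀]
        (fun z : 𝒳 × ℝ × ℝ => π₀ z.1 * m₀ z.1) - fun z => m z.1 * π₀ z.1 := by
      rw [hg_eq]
      refine (condExp_sub hAYint hAmint _).trans ?_
      have hmul : P₀[(fun z : 𝒳 × ℝ × ℝ => m z.1 * z.2.1)|MeasurableSpace.comap (fun z : 𝒳 × ℝ × ℝ => z.1) inferInstance] =ᵐ[P₀]
          (fun z : 𝒳 × ℝ × ℝ => m z.1) * P₀[(fun z : 𝒳 × ℝ × ℝ => z.2.1)|MeasurableSpace.comap (fun z : 𝒳 × ℝ × ℝ => z.1) inferInstance] := by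
        have := condExp_mul_of_stronglyMeasurable_left (μ := P₀) (m := MeasurableSpace.comap (fun z : 𝒳 × ℝ × ℝ => z.1) inferInstance)
          (hsm m hmmeas) (f := fun z : 𝒳 × ℝ × ℝ => m z.1)
          (g := fun z : 𝒳 × ℝ × ℝ => z.2.1) (by
            have : ((fun z : 𝒳 × ℝ × ℝ => m z.1) * fun z : 𝒳 × ℝ × ℝ => z.2.1)
                = fun z : 𝒳 × ℝ × ℝ => m z.1 * z.2.1 := rfl
            rw [this]; exact hAmint) hAint
        exact this
      filter_upwards [hm₀ver, hmul, hπ₀ver] with z h₁ h₂ h₃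
      simp only [Pi.sub_apply, Pi.mul_apply] at *
      rw [← h₁, h₂, ← h₃]
    have h4 : f * P₀[g|MeasurableSpace.comap (fun z : 𝒳 × ℝ × ℝ => z.1) inferInstance] =ᵐ[P₀]
        fun z : 𝒳 × ℝ × ℝ => π₀ z.1 / π z.1 * (m₀ z.1 - m z.1) := by
      filter_upwards [h3] with z hz
      simp only [Pi.mul_apply, hf]
      rw [hz]
      simp only [Pi.sub_apply]
      ring
    have h5 : ∫ z, (f * P₀[g|MeasurableSpace.comap (fun z : 𝒳 × ℝ × ℝ => z.1) inferInstance]) z ∂P₀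
        = ∫ z, π₀ z.1 / π z.1 * (m₀ z.1 - m z.1) ∂P₀ := integral_congr_ae h4
    have h6 : ∫ z, π₀ z.1 / π z.1 * (m₀ z.1 - m z.1) ∂P₀
        = ∫ x, π₀ x / π x * (m₀ x - m x) ∂Q₀ := by
      rw [hQ₀]
      exact (integral_map measurable_fst.aemeasurable
        (((hπ₀meas.div hπmeas).mul (hm₀meas.sub hmmeas)).aestronglyMeasurable)).symm
    calc ∫ z, z.2.1 / π z.1 * (z.2.2 - m z.1) ∂P₀
        = ∫ z, (f * g) z ∂P₀ := by rw [← hfg_eq]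
      _ = ∫ z, (P₀[f * g|MeasurableSpace.comap (fun z : 𝒳 × ℝ × ℝ => z.1) inferInstance]) z ∂P₀ := h1
      _ = ∫ z, (f * P₀[g|MeasurableSpace.comap (fun z : 𝒳 × ℝ × ℝ => z.1) inferInstance]) z ∂P₀ := integral_congr_ae h2
      _ = ∫ x, π₀ x / π x * (m₀ x - m x) ∂Q₀ := by rw [h5, h6]
  -- integrability of π₀/π (m₀ - m) on Q₀
  have hHint : Integrable (fun x => π₀ x / π x * (m₀ x - m x)) Q₀ := by
    have heq : (fun x => π₀ x / π x * (m₀ x - m x))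
        = fun x => (m₀ x - m x) - π₀ x * (1 / π₀ x - 1 / π x) * (m₀ x - m x) := by
      funext x
      have h1 : π₀ x * (1 / π₀ x - 1 / π x) = 1 - π₀ x / π x := by
        rw [mul_sub, mul_one_div, div_self (hπ₀ne x), mul_one_div]
      rw [h1]; ring
    rw [heq]
    exact (hint2.sub hmQ₀).sub hint3
  -- the pointwise identity for the target integrand
  have hpoint : ∀ x, π₀ x * (1 / π₀ x - 1 / π x) * (m₀ x - m x)
      = (m₀ x - m x) - π₀ x / π x * (m₀ x - m x) := by
    intro x
    have h1 : π₀ x * (1 / π₀ x - 1 / π x) = 1 - π₀ x / π x := by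
      rw [mul_sub, mul_one_div, div_self (hπ₀ne x), mul_one_div]
    rw [h1]; ring
  -- compute the integral of the EIF
  have hmean : ∫ z, (z.2.1 / π z.1 * (z.2.2 - m z.1) + m z.1 - ∫ x, m x ∂Q) ∂P₀
      = (∫ x, π₀ x / π x * (m₀ x - m x) ∂Q₀) + (∫ x, m x ∂Q₀) - ∫ x, m x ∂Q := by
    rw [integral_sub hint1 (integrable_const _), integral_const, probReal_univ]
    simp only [ENNReal.toReal_one, one_smul]
    rw [integral_add hfgint hmP₀, key]
    have hmm : ∫ z, m z.1 ∂P₀ = ∫ x, m x ∂Q₀ := by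
      rw [hQ₀]
      exact (integral_map measurable_fst.aemeasurable (hQ₀ ▸ hmL2.1)).symm
    rw [hmm]
  -- the identity
  have hidentity : (∫ x, m₀ x ∂Q₀) - (∫ x, m x ∂Q)
      - ∫ z, (z.2.1 / π z.1 * (z.2.2 - m z.1) + m z.1 - ∫ x, m x ∂Q) ∂P₀
      = ∫ x, π₀ x * (1 / π₀ x - 1 / π x) * (m₀ x - m x) ∂Q₀ := by
    rw [hmean]
    have : ∫ x, π₀ x * (1 / π₀ x - 1 / π x) * (m₀ x - m x) ∂Q₀
        = ∫ x, ((m₀ x - m x) - π₀ x / π x * (m₀ x - m x)) ∂Q₀ :=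
      integral_congr_ae (Eventually.of_forall fun x => hpoint x)
    rw [this]
    have hsubint : Integrable (fun x => m₀ x - m x) Q₀ := hint2.sub hmQ₀
    have e1 : ∫ x, ((m₀ x - m x) - π₀ x / π x * (m₀ x - m x)) ∂Q₀
        = (∫ x, (m₀ x - m x) ∂Q₀) - ∫ x, π₀ x / π x * (m₀ x - m x) ∂Q₀ :=
      integral_sub hsubint hHint
    have e2 : ∫ x, (m₀ x - m x) ∂Q₀ = (∫ x, m₀ x ∂Q₀) - ∫ x, m x ∂Q₀ :=
      integral_sub hint2 hmQ₀
    rw [e1, e2]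
    ring
  refine ⟨hidentity, ?_⟩
  rw [hidentity]
  -- Cauchy-Schwarz bound
  set f2 : 𝒳 → ℝ := fun x => 1 / π₀ x - 1 / π x with hf2
  set g2 : 𝒳 → ℝ := fun x => m₀ x - m x with hg2
  have habs_le : ∀ x, |π₀ x * f2 x * g2 x| ≤ ‖f2 x‖ * ‖g2 x‖ := by
    intro x
    rw [abs_mul, abs_mul, Real.norm_eq_abs, Real.norm_eq_abs]
    have h0 : (0:ℝ) ≤ π₀ x := le_of_lt (hπ₀range x).1
    have h1 : |π₀ x| ≤ 1 := by rw [abs_of_nonneg h0]; exact (hπ₀range x).2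
    nlinarith [mul_nonneg (abs_nonneg (f2 x)) (abs_nonneg (g2 x)), h1, abs_nonneg (π₀ x)]
  have hfgprod : Integrable (fun x => ‖f2 x‖ * ‖g2 x‖) Q₀ := by
    refine Integrable.mono' (hL2a.integrable_sq.add hL2b.integrable_sq)
      (hL2a.1.norm.mul hL2b.1.norm) ?_
    refine Eventually.of_forall fun x => ?_
    show ‖‖f2 x‖ * ‖g2 x‖‖ ≤ f2 x ^ 2 + g2 x ^ 2
    rw [Real.norm_eq_abs, abs_mul, abs_norm, abs_norm, Real.norm_eq_abs, Real.norm_eq_abs]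
    nlinarith [mul_nonneg (abs_nonneg (f2 x)) (abs_nonneg (g2 x)), sq_abs (f2 x),
      sq_abs (g2 x), sq_nonneg (|f2 x| - |g2 x|)]
  have step1 : |∫ x, π₀ x * f2 x * g2 x ∂Q₀| ≤ ∫ x, ‖f2 x‖ * ‖g2 x‖ ∂Q₀ := by
    calc |∫ x, π₀ x * f2 x * g2 x ∂Q₀| ≤ ∫ x, |π₀ x * f2 x * g2 x| ∂Q₀ := by
          have := norm_integral_le_integral_norm (μ := Q₀) (fun x => π₀ x * f2 x * g2 x)
          simp only [Real.norm_eq_abs] at this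
          exact this
      _ ≤ _ := integral_mono hint3.abs hfgprod (fun x => habs_le x)
  have hpq : (2:ℝ).HolderConjugate 2 := Real.HolderConjugate.two_two
  have hL2a' : MemLp f2 (ENNReal.ofReal 2) Q₀ := by
    rwa [show ENNReal.ofReal 2 = 2 by norm_num]
  have hL2b' : MemLp g2 (ENNReal.ofReal 2) Q₀ := by
    rwa [show ENNReal.ofReal 2 = 2 by norm_num]
  have step2 := integral_mul_norm_le_Lp_mul_Lq (μ := Q₀) hpq hL2a' hL2b'
  have hconv : ∀ (h : 𝒳 → ℝ), (∫ x, ‖h x‖ ^ (2:ℝ) ∂Q₀) ^ (1/(2:ℝ))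
      = Real.sqrt (∫ x, h x ^ 2 ∂Q₀) := by
    intro h
    rw [Real.sqrt_eq_rpow]
    congr 1
    refine integral_congr_ae (Eventually.of_forall fun x => ?_)
    show ‖h x‖ ^ (2:ℝ) = h x ^ 2
    rw [show (2:ℝ) = ((2:ℕ):ℝ) by norm_num, Real.rpow_natCast]
    simp [sq_abs]
  calc |∫ x, π₀ x * f2 x * g2 x ∂Q₀| ≤ ∫ x, ‖f2 x‖ * ‖g2 x‖ ∂Q₀ := step1
    _ ≤ (∫ x, ‖f2 x‖ ^ (2:ℝ) ∂Q₀) ^ (1/(2:ℝ)) * (∫ x, ‖g2 x‖ ^ (2:ℝ) ∂Q₀) ^ (1/(2:ℝ)) := step2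
    _ = Real.sqrt (∫ x, f2 x ^ 2 ∂Q₀) * Real.sqrt (∫ x, g2 x ^ 2 ∂Q₀) := by
        rw [hconv f2, hconv g2]
end

section
/- Let (X, A, Y) have joint law P_0 with X ∈ 𝒳, A ∈ {0,1}, and Y real-valued. Let π, π_0 : 𝒳 → (0,1] and m, m_0 : 𝒳 → ℝ be measurable, and suppose for some constants δ, C > 0 that 1/π ≤ 1/δ and 1/π_0 ≤ 1/δ pointwise, and |Y − m(X)| ≤ C P_0-almost surely. Define ψ_P(Z) = (A/π(X))(Y − m(X)) + m(X) and ψ_{P_0}(Z) = (A/π_0(X))(Y − m_0(X)) + m_0(X). Then ‖ψ_P − ψ_{P_0}‖_{L²(P_0)} ≤ (1 + 1/δ)·‖m − m_0‖_{L²(P_0)} + C·‖1/π − 1/π_0‖_{L²(P_0)}. -/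
open MeasureTheory ProbabilityTheory Filter
open scoped NNReal ENNReal

private lemma eLpNorm_two_eq_sqrt' {α : Type*} [MeasurableSpace α] {μ : Measure α}
    {u : α → ℝ} (hu : MemLp u 2 μ) :
    eLpNorm u 2 μ = ENNReal.ofReal (Real.sqrt (∫ z, u z ^ 2 ∂μ)) := by
  rw [hu.eLpNorm_eq_integral_rpow_norm two_ne_zero ENNReal.ofNat_ne_top]
  have hi : (∫ z, ‖u z‖ ^ (2:ℝ≥0∞).toReal ∂μ) = ∫ z, u z ^ 2 ∂μ := by
    refine integral_congr_ae (Filter.Eventually.of_forall fun z => ?_)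
    show ‖u z‖ ^ (2:ℝ≥0∞).toReal = u z ^ 2
    rw [show ((2:ℝ≥0∞).toReal) = ((2:ℕ):ℝ) by norm_num, Real.rpow_natCast]
    simp [sq_abs]
  rw [hi, Real.sqrt_eq_rpow]
  norm_num

private lemma integral_sq_smul {α : Type*} [MeasurableSpace α] {μ : Measure α}
    (c : ℝ) (u : α → ℝ) :
    (∫ z, ((c • u) z) ^ 2 ∂μ) = c ^ 2 * ∫ z, u z ^ 2 ∂μ := by
  simp_rw [Pi.smul_apply, smul_eq_mul, mul_pow]
  exact integral_const_mul _ _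

/-- **L² perturbation bound for the (uncentred) missing-at-random influence function.**
With `ψ_P(z) = (a/π(x))(y − m(x)) + m(x)` and `ψ_{P₀}(z) = (a/π₀(x))(y − m₀(x)) + m₀(x)`,
if `1/π ≤ 1/δ`, `1/π₀ ≤ 1/δ` pointwise, `A ∈ {0,1}` and `|Y − m(X)| ≤ C` a.s., then
`‖ψ_P − ψ_{P₀}‖_{L²(P₀)} ≤ (1 + 1/δ)‖m − m₀‖_{L²(P₀)} + C‖1/π − 1/π₀‖_{L²(P₀)}`. -/
theorem missing_influence_L2_perturbation
    {𝒳 : Type*} [MeasurableSpace 𝒳]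
    (P₀ : Measure (𝒳 × ℝ × ℝ)) [IsProbabilityMeasure P₀]
    (hA : ∀ᵐ z ∂P₀, z.2.1 = 0 ∨ z.2.1 = 1)
    (π π₀ m m₀ : 𝒳 → ℝ)
    (hπmeas : Measurable π) (hπ₀meas : Measurable π₀)
    (hmmeas : Measurable m) (hm₀meas : Measurable m₀)
    (δ C : ℝ) (hδ : 0 < δ) (hC : 0 < C)
    (hπrange : ∀ x, 0 < π x ∧ π x ≤ 1) (hπ₀range : ∀ x, 0 < π₀ x ∧ π₀ x ≤ 1)
    (hπbdd : ∀ x, 1 / π x ≤ 1 / δ) (hπ₀bdd : ∀ x, 1 / π₀ x ≤ 1 / δ)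
    (hYm : ∀ᵐ z ∂P₀, |z.2.2 - m z.1| ≤ C)
    (hmL2 : MemLp (fun z : 𝒳 × ℝ × ℝ => m z.1 - m₀ z.1) 2 P₀)
    (hπL2 : MemLp (fun z : 𝒳 × ℝ × ℝ => 1 / π z.1 - 1 / π₀ z.1) 2 P₀) :
    Real.sqrt (∫ z, ((z.2.1 / π z.1 * (z.2.2 - m z.1) + m z.1)
          - (z.2.1 / π₀ z.1 * (z.2.2 - m₀ z.1) + m₀ z.1)) ^ 2 ∂P₀)
      ≤ (1 + 1 / δ) * Real.sqrt (∫ z, (m z.1 - m₀ z.1) ^ 2 ∂P₀)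
        + C * Real.sqrt (∫ z, (1 / π z.1 - 1 / π₀ z.1) ^ 2 ∂P₀) := by
  set f : 𝒳 × ℝ × ℝ → ℝ := fun z =>
    (z.2.1 / π z.1 * (z.2.2 - m z.1) + m z.1)
      - (z.2.1 / π₀ z.1 * (z.2.2 - m₀ z.1) + m₀ z.1) with hf_def
  set g : 𝒳 × ℝ × ℝ → ℝ := fun z => (1 - z.2.1 / π₀ z.1) * (m z.1 - m₀ z.1) with hg_def
  set h : 𝒳 × ℝ × ℝ → ℝ := fun z => z.2.1 * (z.2.2 - m z.1) * (1 / π z.1 - 1 / π₀ z.1)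
    with hh_def
  have hδ' : (0:ℝ) < 1 / δ := by positivity
  have hcnn : (0:ℝ) ≤ 1 + 1 / δ := by positivity
  -- pointwise decomposition
  have hfgh : f = g + h := by
    funext z
    simp only [hf_def, hg_def, hh_def, Pi.add_apply]
    ring
  -- a.e. bound for g
  have hg_bd : ∀ᵐ z ∂P₀, ‖g z‖ ≤ ‖((1 + 1/δ) • fun z : 𝒳 × ℝ × ℝ => m z.1 - m₀ z.1) z‖ := by
    filter_upwards [hA] with z hz
    simp only [hg_def, Pi.smul_apply, smul_eq_mul, norm_mul, Real.norm_eq_abs]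
    apply mul_le_mul_of_nonneg_right _ (abs_nonneg _)
    rw [abs_of_nonneg hcnn]
    rcases hz with h0 | h1
    · rw [h0]; simp; linarith
    · rw [h1]
      have h1le : (1:ℝ) ≤ 1 / π₀ z.1 := by
        rw [le_div_iff₀ (hπ₀range z.1).1]; simpa using (hπ₀range z.1).2
      have hub := hπ₀bdd z.1
      rw [abs_of_nonpos (by linarith)]
      linarith
  -- a.e. bound for h
  have hh_bd : ∀ᵐ z ∂P₀, ‖h z‖ ≤ ‖(C • fun z : 𝒳 × ℝ × ℝ => 1 / π z.1 - 1 / π₀ z.1) z‖ := by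
    filter_upwards [hA, hYm] with z hz hY
    simp only [hh_def, Pi.smul_apply, smul_eq_mul, norm_mul, Real.norm_eq_abs]
    apply mul_le_mul_of_nonneg_right _ (abs_nonneg _)
    rw [abs_of_nonneg hC.le]
    rcases hz with h0 | h1
    · rw [h0]; simpa using hC.le
    · rw [h1]; simpa using hY
  -- Memℒp facts
  have hgL2 : MemLp g 2 P₀ := by
    refine MemLp.of_le (hmL2.const_smul (1 + 1/δ)) ?_ hg_bd
    apply Measurable.aestronglyMeasurable
    fun_prop
  have hhL2 : MemLp h 2 P₀ := by
    refine MemLp.of_le (hπL2.const_smul C) ?_ hh_bd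
    apply AEStronglyMeasurable.mul
    · exact (measurable_snd.fst.mul
        ((measurable_snd.snd.sub (hmmeas.comp measurable_fst)))).aestronglyMeasurable
    · exact hπL2.1
  have hfL2 : MemLp f 2 P₀ := by rw [hfgh]; exact hgL2.add hhL2
  -- translate everything into eLpNorm
  have key : eLpNorm f 2 P₀ ≤ eLpNorm g 2 P₀ + eLpNorm h 2 P₀ := by
    rw [hfgh]
    exact eLpNorm_add_le hgL2.1 hhL2.1 one_le_two
  have hg_le : eLpNorm g 2 P₀
      ≤ ENNReal.ofReal ((1 + 1/δ) * Real.sqrt (∫ z, (m z.1 - m₀ z.1) ^ 2 ∂P₀)) := by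
    refine le_trans (eLpNorm_mono_ae hg_bd) ?_
    rw [eLpNorm_two_eq_sqrt' (hmL2.const_smul (1 + 1/δ)), integral_sq_smul,
      Real.sqrt_mul (by positivity), Real.sqrt_sq hcnn]
  have hh_le : eLpNorm h 2 P₀
      ≤ ENNReal.ofReal (C * Real.sqrt (∫ z, (1 / π z.1 - 1 / π₀ z.1) ^ 2 ∂P₀)) := by
    refine le_trans (eLpNorm_mono_ae hh_bd) ?_
    rw [eLpNorm_two_eq_sqrt' (hπL2.const_smul C), integral_sq_smul,
      Real.sqrt_mul (by positivity), Real.sqrt_sq hC.le]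
  have final : ENNReal.ofReal (Real.sqrt (∫ z, f z ^ 2 ∂P₀))
      ≤ ENNReal.ofReal ((1 + 1/δ) * Real.sqrt (∫ z, (m z.1 - m₀ z.1) ^ 2 ∂P₀)
        + C * Real.sqrt (∫ z, (1 / π z.1 - 1 / π₀ z.1) ^ 2 ∂P₀)) := by
    rw [← eLpNorm_two_eq_sqrt' hfL2,
      ENNReal.ofReal_add (by positivity) (by positivity)]
    exact key.trans (add_le_add hg_le hh_le)
  rw [ENNReal.ofReal_le_ofReal_iff (by positivity)] at final
  exact final
end

section
/- Let (X, A, Y) have joint law P_0 with X ∈ 𝒳, A ∈ {0,1}, and Y real-valued and integrable; let Q_0 be the law of X, and let π_0(x) be a version of E[A | X = x], μ_0^(1)(x) satisfy E[AY | X] = π_0(X)μ_0^(1)(X) a.s., and μ_0^(0)(x) satisfy E[(1−A)Y | X] = (1 − π_0(X))μ_0^(0)(X) a.s., with ∫ π_0 dQ_0 > 0. Define χ(P_0) = ∫ π_0(μ_0^(1) − μ_0^(0)) dQ_0 / ∫ π_0 dQ_0. Let π : 𝒳 → [0, 1−δ] for some δ > 0 and μ^(0) ∈ L²(Q_0) be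 measurable, and let h(Z) = ((A − π(X))/(1 − π(X)))(Y − μ^(0)(X)) − A·χ(P_0). Then, assuming integrability of all terms, E_{P_0}[h(Z)] = ∫ (π(x) − π_0(x))(μ^(0)(x) − μ_0^(0)(x))/(1 − π(x)) dQ_0(x), and |E_{P_0}[h(Z)]| ≤ (1/δ)·‖π − π_0‖_{L²(Q_0)}·‖μ^(0) − μ_0^(0)‖_{L²(Q_0)}. -/
open MeasureTheory ProbabilityTheory Filter
open scoped NNReal ENNReal

private lemma att_aux_pullout {𝒳 : Type*} [MeasurableSpace 𝒳]
    (P₀ : Measure (𝒳 × ℝ × ℝ)) [IsProbabilityMeasure P₀]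
    (c : 𝒳 → ℝ) (f : 𝒳 × ℝ × ℝ → ℝ) (hc : Measurable c) (hf : Integrable f P₀)
    (hcf : Integrable (fun z => c z.1 * f z) P₀) :
    ∫ z, c z.1 * f z ∂P₀ = ∫ z, c z.1 *
      (P₀[f | MeasurableSpace.comap (fun z : 𝒳 × ℝ × ℝ => z.1) inferInstance]) z ∂P₀ := by
  set m := MeasurableSpace.comap (fun z : 𝒳 × ℝ × ℝ => z.1) inferInstance with hm_def
  have hm : m ≤ (Prod.instMeasurableSpace : MeasurableSpace (𝒳 × ℝ × ℝ)) := by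
    rw [hm_def]
    exact Measurable.comap_le (by exact measurable_fst)
  have hfstm : Measurable[m] (fun z : 𝒳 × ℝ × ℝ => z.1) := Measurable.of_comap_le le_rfl
  have hsm : StronglyMeasurable[m] (fun z : 𝒳 × ℝ × ℝ => c z.1) :=
    (hc.comp hfstm).stronglyMeasurable
  have h := condExp_mul_of_stronglyMeasurable_left (μ := P₀) (m := m) hsm hcf hf
  calc ∫ z, c z.1 * f z ∂P₀
      = ∫ z, (P₀[(fun z : 𝒳 × ℝ × ℝ => c z.1) * f | m]) z ∂P₀ :=
        (integral_condExp (μ := P₀) hm (f := (fun z : 𝒳 × ℝ × ℝ => c z.1) * f)).symm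
    _ = ∫ z, c z.1 * (P₀[f | m]) z ∂P₀ := integral_congr_ae h

private lemma att_aux_cs {𝒳 : Type*} [MeasurableSpace 𝒳] (Q : Measure 𝒳)
    [IsProbabilityMeasure Q] (f g : 𝒳 → ℝ) (hf : MemLp f 2 Q) (hg : MemLp g 2 Q) :
    ∫ x, |f x| * |g x| ∂Q ≤ Real.sqrt (∫ x, f x ^ 2 ∂Q) * Real.sqrt (∫ x, g x ^ 2 ∂Q) := by
  have h2 : ENNReal.ofReal (2:ℝ) = 2 := by norm_num
  have hpq : Real.HolderConjugate 2 2 := Real.holderConjugate_iff.mpr ⟨by norm_num, by norm_num⟩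
  have h := integral_mul_le_Lp_mul_Lq_of_nonneg (μ := Q) hpq
    (f := fun x => |f x|) (g := fun x => |g x|)
    (Filter.Eventually.of_forall fun x => abs_nonneg _)
    (Filter.Eventually.of_forall fun x => abs_nonneg _)
    (by rw [h2]; exact hf.abs) (by rw [h2]; exact hg.abs)
  calc ∫ x, |f x| * |g x| ∂Q
      ≤ (∫ x, |f x| ^ (2:ℝ) ∂Q) ^ (1/(2:ℝ)) * (∫ x, |g x| ^ (2:ℝ) ∂Q) ^ (1/(2:ℝ)) := h
    _ = Real.sqrt (∫ x, f x ^ 2 ∂Q) * Real.sqrt (∫ x, g x ^ 2 ∂Q) := by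
        have habs : ∀ (u : 𝒳 → ℝ), (fun x => |u x| ^ (2:ℝ)) = fun x => u x ^ 2 := by
          intro u; funext x
          rw [show (2:ℝ) = ((2:ℕ):ℝ) by norm_num, Real.rpow_natCast, sq_abs]
        rw [habs f, habs g, Real.sqrt_eq_rpow, Real.sqrt_eq_rpow]

/-- **Second-order remainder identity and doubly robust bound for the ATT.**
For data `(X, A, Y) ~ P₀` with `A ∈ {0,1}`, `Y` integrable, `π₀` a version of `E[A|X]`,
`μ₀¹, μ₀⁰` satisfying `E[AY|X] = π₀ μ₀¹` and `E[(1−A)Y|X] = (1−π₀) μ₀⁰` a.s., `∫ π₀ dQ₀ > 0`,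
`χ(P₀) = ∫ π₀(μ₀¹ − μ₀⁰) dQ₀ / ∫ π₀ dQ₀`, `π : 𝒳 → [0, 1−δ]`, and
`h(Z) = ((A − π(X))/(1 − π(X)))(Y − μ⁰(X)) − A·χ(P₀)`, one has
`E_{P₀}[h] = ∫ (π − π₀)(μ⁰ − μ₀⁰)/(1 − π) dQ₀` and
`|E_{P₀}[h]| ≤ (1/δ)‖π − π₀‖_{L²(Q₀)}‖μ⁰ − μ₀⁰‖_{L²(Q₀)}`. -/
theorem att_second_order_bias
    {𝒳 : Type*} [MeasurableSpace 𝒳]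
    (P₀ : Measure (𝒳 × ℝ × ℝ)) [IsProbabilityMeasure P₀]
    (hA : ∀ᵐ z ∂P₀, z.2.1 = 0 ∨ z.2.1 = 1)
    (hYint : Integrable (fun z : 𝒳 × ℝ × ℝ => z.2.2) P₀)
    (Q₀ : Measure 𝒳) (hQ₀ : Q₀ = P₀.map Prod.fst)
    (π₀ : 𝒳 → ℝ) (hπ₀meas : Measurable π₀) (hπ₀range : ∀ x, 0 ≤ π₀ x ∧ π₀ x ≤ 1)
    (hπ₀ver : (fun z : 𝒳 × ℝ × ℝ => π₀ z.1) =ᵐ[P₀]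
      P₀[(fun z : 𝒳 × ℝ × ℝ => z.2.1) |
        MeasurableSpace.comap (fun z : 𝒳 × ℝ × ℝ => z.1) inferInstance])
    (μ01 μ00 : 𝒳 → ℝ) (hμ01meas : Measurable μ01) (hμ00meas : Measurable μ00)
    (hμ01ver : (fun z : 𝒳 × ℝ × ℝ => π₀ z.1 * μ01 z.1) =ᵐ[P₀]
      P₀[(fun z : 𝒳 × ℝ × ℝ => z.2.1 * z.2.2) |
        MeasurableSpace.comap (fun z : 𝒳 × ℝ × ℝ => z.1) inferInstance])
    (hμ00ver : (fun z : 𝒳 × ℝ × ℝ => (1 - π₀ z.1) * μ00 z.1) =ᵐ[P₀]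
      P₀[(fun z : 𝒳 × ℝ × ℝ => (1 - z.2.1) * z.2.2) |
        MeasurableSpace.comap (fun z : 𝒳 × ℝ × ℝ => z.1) inferInstance])
    (hπ₀pos : 0 < ∫ x, π₀ x ∂Q₀)
    (χATT : ℝ)
    (hχ : χATT = (∫ x, π₀ x * (μ01 x - μ00 x) ∂Q₀) / ∫ x, π₀ x ∂Q₀)
    (δ : ℝ) (hδ : 0 < δ)
    (π : 𝒳 → ℝ) (hπmeas : Measurable π) (hπrange : ∀ x, 0 ≤ π x ∧ π x ≤ 1 - δ)
    (μ0 : 𝒳 → ℝ) (hμ0meas : Measurable μ0) (hμ0L2 : MemLp μ0 2 Q₀)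
    -- integrability of all the terms appearing below
    (hμ00L2 : MemLp μ00 2 Q₀)
    (hint1 : Integrable (fun z : 𝒳 × ℝ × ℝ =>
      (z.2.1 - π z.1) / (1 - π z.1) * (z.2.2 - μ0 z.1) - z.2.1 * χATT) P₀)
    (hint2 : Integrable (fun x => (π x - π₀ x) * (μ0 x - μ00 x) / (1 - π x)) Q₀) :
    (∫ z, ((z.2.1 - π z.1) / (1 - π z.1) * (z.2.2 - μ0 z.1) - z.2.1 * χATT) ∂P₀
      = ∫ x, (π x - π₀ x) * (μ0 x - μ00 x) / (1 - π x) ∂Q₀) ∧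
    |∫ z, ((z.2.1 - π z.1) / (1 - π z.1) * (z.2.2 - μ0 z.1) - z.2.1 * χATT) ∂P₀|
      ≤ (1 / δ) * (Real.sqrt (∫ x, (π x - π₀ x) ^ 2 ∂Q₀)
          * Real.sqrt (∫ x, (μ0 x - μ00 x) ^ 2 ∂Q₀)) := by
  -- basic setup
  have hQprob : IsProbabilityMeasure Q₀ := by
    rw [hQ₀]; exact Measure.isProbabilityMeasure_map measurable_fst.aemeasurable
  have hm : MeasurableSpace.comap (fun z : 𝒳 × ℝ × ℝ => z.1) inferInstance
      ≤ (Prod.instMeasurableSpace : MeasurableSpace (𝒳 × ℝ × ℝ)) :=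
    Measurable.comap_le (by exact measurable_fst)
  have hδπ : ∀ x, δ ≤ 1 - π x := fun x => by linarith [(hπrange x).2]
  have h1πpos : ∀ x, 0 < 1 - π x := fun x => lt_of_lt_of_le hδ (hδπ x)
  have h1πne : ∀ x, (1:ℝ) - π x ≠ 0 := fun x => (h1πpos x).ne'
  -- measurability of coordinates
  have hAmeas : Measurable (fun z : 𝒳 × ℝ × ℝ => z.2.1) := measurable_fst.comp measurable_snd
  have hYmeas : Measurable (fun z : 𝒳 × ℝ × ℝ => z.2.2) := measurable_snd.comp measurable_snd
  -- transfer between Q₀ and P₀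
  have hintQP : ∀ {g : 𝒳 → ℝ}, AEStronglyMeasurable g Q₀ →
      (Integrable g Q₀ ↔ Integrable (fun z : 𝒳 × ℝ × ℝ => g z.1) P₀) := by
    intro g hg
    rw [hQ₀] at hg ⊢
    exact integrable_map_measure hg measurable_fst.aemeasurable
  have hieqQP : ∀ {g : 𝒳 → ℝ}, AEStronglyMeasurable g Q₀ →
      ∫ x, g x ∂Q₀ = ∫ z, g z.1 ∂P₀ := by
    intro g hg
    rw [hQ₀] at hg ⊢
    exact integral_map measurable_fst.aemeasurable hg
  -- integrability over P₀ of the coordinate functions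
  have hAint : Integrable (fun z : 𝒳 × ℝ × ℝ => z.2.1) P₀ := by
    refine (integrable_const (1:ℝ)).mono' hAmeas.aestronglyMeasurable ?_
    filter_upwards [hA] with z hz
    rcases hz with h | h <;> simp [h]
  have hAYint : Integrable (fun z : 𝒳 × ℝ × ℝ => z.2.1 * z.2.2) P₀ := by
    refine hYint.abs.mono' (hAmeas.mul hYmeas).aestronglyMeasurable ?_
    filter_upwards [hA] with z hz
    rcases hz with h | h <;> simp [h, abs_nonneg]
  have h1AYint : Integrable (fun z : 𝒳 × ℝ × ℝ => (1 - z.2.1) * z.2.2) P₀ := by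
    refine hYint.abs.mono' ((measurable_const.sub hAmeas).mul hYmeas).aestronglyMeasurable ?_
    filter_upwards [hA] with z hz
    rcases hz with h | h <;> simp [h, abs_nonneg]
  -- integrability of the conditional-expectation versions
  have hg1P : Integrable (fun z : 𝒳 × ℝ × ℝ => π₀ z.1 * μ01 z.1) P₀ :=
    integrable_condExp.congr hμ01ver.symm
  have hg1Q : Integrable (fun x => π₀ x * μ01 x) Q₀ :=
    (hintQP (hπ₀meas.mul hμ01meas).aestronglyMeasurable).mpr hg1P
  have hμ0int : Integrable μ0 Q₀ := hμ0L2.integrable (by norm_num)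
  have hμ00int : Integrable μ00 Q₀ := hμ00L2.integrable (by norm_num)
  have hπ₀int : Integrable π₀ Q₀ := by
    refine (integrable_const (1:ℝ)).mono' hπ₀meas.aestronglyMeasurable ?_
    refine Filter.Eventually.of_forall fun x => ?_
    rw [Real.norm_eq_abs, abs_of_nonneg (hπ₀range x).1]; exact (hπ₀range x).2
  have hπ₀μ00int : Integrable (fun x => π₀ x * μ00 x) Q₀ := by
    refine hμ00int.bdd_mul hπ₀meas.aestronglyMeasurable (c := 1) (Filter.Eventually.of_forall fun x => ?_)
    rw [Real.norm_eq_abs, abs_of_nonneg (hπ₀range x).1]; exact (hπ₀range x).2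
  have hg0Q : Integrable (fun x => (1 - π₀ x) * μ00 x) Q₀ := by
    have h := hμ00int.sub hπ₀μ00int
    refine h.congr (Filter.Eventually.of_forall fun x => ?_)
    simp only [Pi.sub_apply]
    ring
  -- the bounded coefficient functions
  have hb2meas : Measurable (fun x => -(π x) / (1 - π x)) :=
    hπmeas.neg.div (measurable_const.sub hπmeas)
  have hb2bd : ∀ x, ‖-(π x) / (1 - π x)‖ ≤ 1 / δ := by
    intro x
    rw [Real.norm_eq_abs, abs_div, abs_neg, abs_of_nonneg (hπrange x).1,
      abs_of_pos (h1πpos x)]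
    apply div_le_div₀ (by positivity) (by linarith [(hπrange x).2]) hδ (hδπ x)
  have hbinvbd : ∀ x, ‖1 / (1 - π x)‖ ≤ 1 / δ := by
    intro x
    rw [Real.norm_eq_abs, abs_div, abs_one, abs_of_pos (h1πpos x)]
    exact div_le_div₀ (by norm_num) le_rfl hδ (hδπ x)
  -- coefficient c₃ and c₄ integrable over Q₀
  have hc3meas : Measurable (fun x => -(μ0 x) / (1 - π x) - χATT) :=
    (hμ0meas.neg.div (measurable_const.sub hπmeas)).sub measurable_const
  have hc3Q : Integrable (fun x => -(μ0 x) / (1 - π x) - χATT) Q₀ := by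
    have h1 : Integrable (fun x => (1 / (1 - π x)) * μ0 x) Q₀ :=
      hμ0int.bdd_mul ((measurable_const.div (measurable_const.sub hπmeas))).aestronglyMeasurable
        (Filter.Eventually.of_forall hbinvbd)
    have h2 : Integrable (fun x => -(μ0 x) / (1 - π x)) Q₀ := by
      refine h1.neg.congr (Filter.Eventually.of_forall fun x => ?_)
      field_simp
      rfl
    exact h2.sub (integrable_const χATT)
  have hc4meas : Measurable (fun x => π x * μ0 x / (1 - π x)) :=
    (hπmeas.mul hμ0meas).div (measurable_const.sub hπmeas)
  have hc4Q : Integrable (fun x => π x * μ0 x / (1 - π x)) Q₀ := by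
    have h1 : Integrable (fun x => (π x / (1 - π x)) * μ0 x) Q₀ := by
      refine hμ0int.bdd_mul (hπmeas.div (measurable_const.sub hπmeas)).aestronglyMeasurable
        (c := 1 / δ) (Filter.Eventually.of_forall fun x => ?_)
      rw [Real.norm_eq_abs, abs_div, abs_of_nonneg (hπrange x).1, abs_of_pos (h1πpos x)]
      apply div_le_div₀ (by positivity) (by linarith [(hπrange x).2]) hδ (hδπ x)
    refine h1.congr (Filter.Eventually.of_forall fun x => ?_)
    ring
  -- integrability of the four summands over P₀
  have ht2 : Integrable (fun z : 𝒳 × ℝ × ℝ =>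
      (-(π z.1) / (1 - π z.1)) * ((1 - z.2.1) * z.2.2)) P₀ :=
    h1AYint.bdd_mul ((hb2meas.comp measurable_fst)).aestronglyMeasurable
      (Filter.Eventually.of_forall fun z => hb2bd z.1)
  have hc3P : Integrable (fun z : 𝒳 × ℝ × ℝ => -(μ0 z.1) / (1 - π z.1) - χATT) P₀ :=
    (hintQP hc3meas.aestronglyMeasurable).mp hc3Q
  have ht3 : Integrable (fun z : 𝒳 × ℝ × ℝ =>
      (-(μ0 z.1) / (1 - π z.1) - χATT) * z.2.1) P₀ := by
    refine hc3P.abs.mono' (((hc3meas.comp measurable_fst)).mul hAmeas).aestronglyMeasurable ?_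
    filter_upwards [hA] with z hz
    rcases hz with h | h <;> simp [h, abs_nonneg]
  have ht4 : Integrable (fun z : 𝒳 × ℝ × ℝ => π z.1 * μ0 z.1 / (1 - π z.1)) P₀ :=
    (hintQP hc4meas.aestronglyMeasurable).mp hc4Q
  -- pointwise decomposition of the integrand
  have hpt : (fun z : 𝒳 × ℝ × ℝ =>
      (z.2.1 - π z.1) / (1 - π z.1) * (z.2.2 - μ0 z.1) - z.2.1 * χATT)
      = fun z : 𝒳 × ℝ × ℝ => z.2.1 * z.2.2 +
          ((-(π z.1) / (1 - π z.1)) * ((1 - z.2.1) * z.2.2) +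
            ((-(μ0 z.1) / (1 - π z.1) - χATT) * z.2.1 +
              π z.1 * μ0 z.1 / (1 - π z.1))) := by
    funext z
    have := h1πne z.1
    field_simp
    ring
  -- split the integral
  have hsplit : ∫ z, ((z.2.1 - π z.1) / (1 - π z.1) * (z.2.2 - μ0 z.1) - z.2.1 * χATT) ∂P₀
      = (∫ z, z.2.1 * z.2.2 ∂P₀)
        + ((∫ z, (-(π z.1) / (1 - π z.1)) * ((1 - z.2.1) * z.2.2) ∂P₀)
          + ((∫ z, (-(μ0 z.1) / (1 - π z.1) - χATT) * z.2.1 ∂P₀)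
            + ∫ z, π z.1 * μ0 z.1 / (1 - π z.1) ∂P₀)) := by
    have hI34 : Integrable (fun z : 𝒳 × ℝ × ℝ =>
        (-(μ0 z.1) / (1 - π z.1) - χATT) * z.2.1 + π z.1 * μ0 z.1 / (1 - π z.1)) P₀ :=
      ht3.add ht4
    have hI234 : Integrable (fun z : 𝒳 × ℝ × ℝ =>
        (-(π z.1) / (1 - π z.1)) * ((1 - z.2.1) * z.2.2) +
          ((-(μ0 z.1) / (1 - π z.1) - χATT) * z.2.1 + π z.1 * μ0 z.1 / (1 - π z.1))) P₀ :=
      ht2.add hI34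
    rw [hpt, integral_add hAYint hI234, integral_add ht2 hI34, integral_add ht3 ht4]
  -- identify each piece as an integral over Q₀
  have hE1 : ∫ z, z.2.1 * z.2.2 ∂P₀ = ∫ x, π₀ x * μ01 x ∂Q₀ := by
    have h1 : ∫ z, z.2.1 * z.2.2 ∂P₀ = ∫ z, π₀ z.1 * μ01 z.1 ∂P₀ :=
      ((integral_condExp (μ := P₀) hm (f := fun z : 𝒳 × ℝ × ℝ => z.2.1 * z.2.2)).symm).trans
        (integral_congr_ae hμ01ver.symm)
    rw [h1, hieqQP (g := fun x => π₀ x * μ01 x) (hπ₀meas.mul hμ01meas).aestronglyMeasurable]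
  have hE2 : ∫ z, (-(π z.1) / (1 - π z.1)) * ((1 - z.2.1) * z.2.2) ∂P₀
      = ∫ x, (-(π x) / (1 - π x)) * ((1 - π₀ x) * μ00 x) ∂Q₀ := by
    have h1 := att_aux_pullout P₀ (fun x => -(π x) / (1 - π x))
      (fun z => (1 - z.2.1) * z.2.2) hb2meas h1AYint ht2
    have h2 : ∫ z, (-(π z.1) / (1 - π z.1)) *
        (P₀[(fun z : 𝒳 × ℝ × ℝ => (1 - z.2.1) * z.2.2) | MeasurableSpace.comap (fun z : 𝒳 × ℝ × ℝ => z.1) inferInstance]) z ∂P₀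
        = ∫ z, (-(π z.1) / (1 - π z.1)) * ((1 - π₀ z.1) * μ00 z.1) ∂P₀ := by
      refine integral_congr_ae ?_
      filter_upwards [hμ00ver] with z hz
      rw [← hz]
    rw [h1, h2, hieqQP (g := fun x => (-(π x) / (1 - π x)) * ((1 - π₀ x) * μ00 x)) (hb2meas.mul ((measurable_const.sub hπ₀meas).mul
      hμ00meas)).aestronglyMeasurable]
  have hE3 : ∫ z, (-(μ0 z.1) / (1 - π z.1) - χATT) * z.2.1 ∂P₀
      = ∫ x, (-(μ0 x) / (1 - π x) - χATT) * π₀ x ∂Q₀ := by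
    have h1 := att_aux_pullout P₀ (fun x => -(μ0 x) / (1 - π x) - χATT)
      (fun z : 𝒳 × ℝ × ℝ => z.2.1) hc3meas hAint ht3
    have h2 : ∫ z, (-(μ0 z.1) / (1 - π z.1) - χATT) *
        (P₀[(fun z : 𝒳 × ℝ × ℝ => z.2.1) | MeasurableSpace.comap (fun z : 𝒳 × ℝ × ℝ => z.1) inferInstance]) z ∂P₀
        = ∫ z, (-(μ0 z.1) / (1 - π z.1) - χATT) * π₀ z.1 ∂P₀ := by
      refine integral_congr_ae ?_
      filter_upwards [hπ₀ver] with z hz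
      rw [← hz]
    rw [h1, h2, hieqQP (g := fun x => (-(μ0 x) / (1 - π x) - χATT) * π₀ x) (hc3meas.mul hπ₀meas).aestronglyMeasurable]
  have hE4 : ∫ z, π z.1 * μ0 z.1 / (1 - π z.1) ∂P₀
      = ∫ x, π x * μ0 x / (1 - π x) ∂Q₀ :=
    (hieqQP hc4meas.aestronglyMeasurable).symm
  -- integrability over Q₀ of the four pieces
  have hg2Q : Integrable (fun x => (-(π x) / (1 - π x)) * ((1 - π₀ x) * μ00 x)) Q₀ :=
    hg0Q.bdd_mul hb2meas.aestronglyMeasurable (Filter.Eventually.of_forall hb2bd)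
  have hg3Q : Integrable (fun x => (-(μ0 x) / (1 - π x) - χATT) * π₀ x) Q₀ := by
    have h1 : Integrable (fun x => π₀ x * (-(μ0 x) / (1 - π x) - χATT)) Q₀ := by
      refine hc3Q.bdd_mul hπ₀meas.aestronglyMeasurable (c := 1) (Filter.Eventually.of_forall fun x => ?_)
      rw [Real.norm_eq_abs, abs_of_nonneg (hπ₀range x).1]; exact (hπ₀range x).2
    exact h1.congr (Filter.Eventually.of_forall fun x => mul_comm _ _)
  -- combine the Q₀ integrals
  have hremint : Integrable (fun x => π₀ x * μ01 x - π₀ x * μ00 x - χATT * π₀ x) Q₀ :=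
    (hg1Q.sub hπ₀μ00int).sub (hπ₀int.const_mul χATT)
  have hcomb : (∫ x, π₀ x * μ01 x ∂Q₀)
      + ((∫ x, (-(π x) / (1 - π x)) * ((1 - π₀ x) * μ00 x) ∂Q₀)
        + ((∫ x, (-(μ0 x) / (1 - π x) - χATT) * π₀ x ∂Q₀)
          + ∫ x, π x * μ0 x / (1 - π x) ∂Q₀))
      = ∫ x, ((π x - π₀ x) * (μ0 x - μ00 x) / (1 - π x)
          + (π₀ x * μ01 x - π₀ x * μ00 x - χATT * π₀ x)) ∂Q₀ := by
    have hI34Q : Integrable (fun x =>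
        (-(μ0 x) / (1 - π x) - χATT) * π₀ x + π x * μ0 x / (1 - π x)) Q₀ := hg3Q.add hc4Q
    have hI234Q : Integrable (fun x =>
        (-(π x) / (1 - π x)) * ((1 - π₀ x) * μ00 x) +
          ((-(μ0 x) / (1 - π x) - χATT) * π₀ x + π x * μ0 x / (1 - π x))) Q₀ :=
      hg2Q.add hI34Q
    rw [← integral_add hg3Q hc4Q, ← integral_add hg2Q hI34Q, ← integral_add hg1Q hI234Q]
    refine integral_congr_ae (Filter.Eventually.of_forall fun x => ?_)
    have := h1πne x
    field_simp
    ring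
  -- the remainder integrates to zero
  have hrem : ∫ x, (π₀ x * μ01 x - π₀ x * μ00 x - χATT * π₀ x) ∂Q₀ = 0 := by
    have hI1 : Integrable (fun x => π₀ x * μ01 x - π₀ x * μ00 x) Q₀ := hg1Q.sub hπ₀μ00int
    have hmul : ∫ x, χATT * π₀ x ∂Q₀ = χATT * ∫ x, π₀ x ∂Q₀ := integral_const_mul χATT π₀
    rw [integral_sub hI1 (hπ₀int.const_mul χATT), integral_sub hg1Q hπ₀μ00int, hmul]
    have hN : ∫ x, π₀ x * (μ01 x - μ00 x) ∂Q₀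
        = (∫ x, π₀ x * μ01 x ∂Q₀) - ∫ x, π₀ x * μ00 x ∂Q₀ := by
      rw [← integral_sub hg1Q hπ₀μ00int]
      refine integral_congr_ae (Filter.Eventually.of_forall fun x => ?_)
      ring
    have hχD : χATT * ∫ x, π₀ x ∂Q₀ = ∫ x, π₀ x * (μ01 x - μ00 x) ∂Q₀ := by
      rw [hχ]
      field_simp
    rw [hχD, hN]
    ring
  -- first conclusion
  have hmain : ∫ z, ((z.2.1 - π z.1) / (1 - π z.1) * (z.2.2 - μ0 z.1) - z.2.1 * χATT) ∂P₀
      = ∫ x, (π x - π₀ x) * (μ0 x - μ00 x) / (1 - π x) ∂Q₀ := by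
    rw [hsplit, hE1, hE2, hE3, hE4, hcomb,
      integral_add hint2 hremint, hrem, add_zero]
  refine ⟨hmain, ?_⟩
  rw [hmain]
  -- second conclusion: Cauchy–Schwarz bound
  have hfg2 : MemLp (fun x => π x - π₀ x) 2 Q₀ := by
    refine MemLp.of_bound (hπmeas.sub hπ₀meas).aestronglyMeasurable 1
      (Filter.Eventually.of_forall fun x => ?_)
    rw [Real.norm_eq_abs, abs_sub_le_iff]
    constructor <;> [skip; skip] <;>
      linarith [(hπrange x).1, (hπrange x).2, (hπ₀range x).1, (hπ₀range x).2]
  have hg2' : MemLp (fun x => μ0 x - μ00 x) 2 Q₀ := hμ0L2.sub hμ00L2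
  have hCS := att_aux_cs Q₀ (fun x => π x - π₀ x) (fun x => μ0 x - μ00 x) hfg2 hg2'
  have habsint : Integrable (fun x => |π x - π₀ x| * |μ0 x - μ00 x|) Q₀ := by
    refine (hμ0int.sub hμ00int).abs.bdd_mul
      ((hπmeas.sub hπ₀meas).abs).aestronglyMeasurable (c := 1) (Filter.Eventually.of_forall fun x => ?_)
    rw [Real.norm_eq_abs, abs_abs, abs_sub_le_iff]
    constructor <;> [skip; skip] <;>
      linarith [(hπrange x).1, (hπrange x).2, (hπ₀range x).1, (hπ₀range x).2]
  have habs_eq : (fun x => |(π x - π₀ x) * (μ0 x - μ00 x) / (1 - π x)|)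
      =ᵐ[Q₀] fun x => |π x - π₀ x| * |μ0 x - μ00 x| / |1 - π x| :=
    Filter.Eventually.of_forall fun x => by dsimp only; rw [abs_div, abs_mul]
  calc |∫ x, (π x - π₀ x) * (μ0 x - μ00 x) / (1 - π x) ∂Q₀|
      ≤ ∫ x, |π x - π₀ x| * |μ0 x - μ00 x| / |1 - π x| ∂Q₀ := by
        simpa [Real.norm_eq_abs] using
          norm_integral_le_integral_norm (μ := Q₀)
            (f := fun x => (π x - π₀ x) * (μ0 x - μ00 x) / (1 - π x))
    _ ≤ ∫ x, (1 / δ) * (|π x - π₀ x| * |μ0 x - μ00 x|) ∂Q₀ := by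
        refine integral_mono (hint2.abs.congr habs_eq) (habsint.const_mul (1 / δ)) fun x => ?_
        rw [abs_of_pos (h1πpos x)]
        rw [div_le_iff₀ (h1πpos x)]
        have hnn : 0 ≤ |π x - π₀ x| * |μ0 x - μ00 x| := by positivity
        calc |π x - π₀ x| * |μ0 x - μ00 x|
            = (1 / δ) * (|π x - π₀ x| * |μ0 x - μ00 x|) * δ := by
              field_simp
          _ ≤ (1 / δ) * (|π x - π₀ x| * |μ0 x - μ00 x|) * (1 - π x) := by
              refine mul_le_mul_of_nonneg_left (hδπ x) (by positivity)
    _ = (1 / δ) * ∫ x, |π x - π₀ x| * |μ0 x - μ00 x| ∂Q₀ := integral_const_mul _ _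
    _ ≤ (1 / δ) * (Real.sqrt (∫ x, (π x - π₀ x) ^ 2 ∂Q₀)
          * Real.sqrt (∫ x, (μ0 x - μ00 x) ^ 2 ∂Q₀)) := by
        refine mul_le_mul_of_nonneg_left hCS (by positivity)
end
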